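/- Let Γ be a weighted graph admitting a lattice embedding F into ℤ^N. Suppose that for some coordinate index i there are exactly two vertices A and B whose images under F have nonzero i-th coordinate, that the i-th coordinate of F(A) is ±1, and that the i-th coordinate of F(B) is c ≠ 0. Let Γ' be the weighted graph obtained from Γ by adding one new vertex C of weight −2 adjacent exactly to A, and decreasing the weight of B by c². Then Γ' admits a lattice embedding F' into ℤ^{N+1}; moreover F' can be chosen so that for some coordinate index the only two vertices whose images have nonzero coordinate there are C and B, these coordinates have absolute values 1 and |c| respectively, and their product equals the product of the i-th coordinates of F(A) and F(B). (GOCL operations preserve lattice embeddability.) -/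

import Mathlib

/-- The standard negative definite bilinear form on `ℤ^N`. -/
def negForm {N : ℕ} (x y : Fin N → ℤ) : ℤ := -∑ i, x i * y i

/-- A lattice embedding of a weighted graph `(G, w)` into `ℤ^N` with its negative
definite form. -/
def IsLatticeEmbedding {V : Type*} (G : SimpleGraph V) (w : V → ℤ) {N : ℕ}
    (F : V → Fin N → ℤ) : Prop :=
  (∀ v, negForm (F v) (F v) = w v) ∧
  (∀ u v, G.Adj u v → negForm (F u) (F v) = 1) ∧
  (∀ u v, u ≠ v → ¬G.Adj u v → negForm (F u) (F v) = 0)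

/-- The graph obtained from `G` by adding one new vertex adjacent exactly to `A`. -/
def goclGraph {V : Type*} [DecidableEq V] (G : SimpleGraph V) (A : V) :
    SimpleGraph (V ⊕ Unit) :=
  SimpleGraph.fromRel (fun x y =>
    match x, y with
    | .inl u, .inl v => G.Adj u v
    | .inl u, .inr _ => u = A
    | .inr _, _ => False)

lemma snoc_negForm {N : ℕ} (x y : Fin N → ℤ) (a b : ℤ) :
    negForm (Fin.snoc x a) (Fin.snoc y b) = negForm x y - a * b := by
  simp [negForm, Fin.sum_univ_castSucc]; ring

lemma single_dot {N : ℕ} (i : Fin N) (t : ℤ) (y : Fin N → ℤ) :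
    ∑ k, (Pi.single i t : Fin N → ℤ) k * y k = t * y i := by
  rw [Finset.sum_eq_single i]
  · simp
  · intro b _ hb; simp [Pi.single_eq_of_ne hb]
  · simp

lemma dot_single {N : ℕ} (i : Fin N) (t : ℤ) (y : Fin N → ℤ) :
    ∑ k, y k * (Pi.single i t : Fin N → ℤ) k = y i * t := by
  rw [Finset.sum_eq_single i]
  · simp
  · intro b _ hb; simp [Pi.single_eq_of_ne hb]
  · simp

lemma gocl_adj_inl_inl {V : Type*} [DecidableEq V] (G : SimpleGraph V) (A : V) (u v : V) :
    (goclGraph G A).Adj (.inl u) (.inl v) ↔ G.Adj u v := by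
  constructor
  · rintro ⟨h1, h2 | h2⟩
    · exact h2
    · exact h2.symm
  · intro h
    exact ⟨by simpa using h.ne, Or.inl h⟩

lemma gocl_adj_inl_inr {V : Type*} [DecidableEq V] (G : SimpleGraph V) (A : V) (u : V) (t : Unit) :
    (goclGraph G A).Adj (.inl u) (.inr t) ↔ u = A := by
  constructor
  · rintro ⟨h1, h2 | h2⟩
    · exact h2
    · exact h2.elim
  · intro h
    exact ⟨by simp, Or.inl h⟩

/-- GOCL operations preserve lattice embeddability. -/
theorem gocl_preserves_embeddability {V : Type*} [Fintype V] [DecidableEq V]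
    (G : SimpleGraph V) (w : V → ℤ) {N : ℕ} (F : V → Fin N → ℤ)
    (hF : IsLatticeEmbedding G w F)
    (i : Fin N) (A B : V) (hAB : A ≠ B)
    (honly : ∀ v, F v i ≠ 0 → v = A ∨ v = B)
    (hA : F A i = 1 ∨ F A i = -1)
    (c : ℤ) (hB : F B i = c) (hc : c ≠ 0) :
    ∃ F' : V ⊕ Unit → Fin (N + 1) → ℤ,
      IsLatticeEmbedding (goclGraph G A)
        (fun x => match x with
          | .inl v => if v = B then w v - c ^ 2 else w v
          | .inr _ => -2) F' ∧
      ∃ j : Fin (N + 1),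
        (∀ x, F' x j ≠ 0 → x = Sum.inr () ∨ x = Sum.inl B) ∧
        |F' (Sum.inr ()) j| = 1 ∧
        |F' (Sum.inl B) j| = |c| ∧
        F' (Sum.inr ()) j * F' (Sum.inl B) j = F A i * F B i := by
  obtain ⟨hw, hadj, hnadj⟩ := hF
  set ε := F A i with hε
  have hεsq : ε * ε = 1 := by rcases hA with h | h <;> simp [← hε, h]
  have hzero : ∀ v, v ≠ A → v ≠ B → F v i = 0 := by
    intro v h1 h2
    by_contra h
    rcases honly v h with rfl | rfl <;> simp at h1 h2
  refine ⟨fun x => match x with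
    | .inl v => Fin.snoc (F v) (if v = B then ε * c else 0)
    | .inr _ => Fin.snoc (Pi.single i (-ε)) 1, ⟨?_, ?_, ?_⟩, ?_⟩
  · rintro (v | ⟨⟩)
    · simp only [snoc_negForm, hw]
      by_cases h : v = B
      · rw [if_pos h, if_pos h]
        have h2 : ε * c * (ε * c) = c ^ 2 := by
          calc ε * c * (ε * c) = (ε * ε) * c ^ 2 := by ring
            _ = c ^ 2 := by rw [hεsq]; ring
        rw [h2]
      · rw [if_neg h, if_neg h]; ring
    · rw [show ((fun x => match x with
          | .inl v => Fin.snoc (F v) (if v = B then ε * c else 0)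
          | .inr _ => Fin.snoc (Pi.single i (-ε)) 1) (Sum.inr ()) : Fin (N+1) → ℤ)
            = Fin.snoc (Pi.single i (-ε)) 1 from rfl]
      rw [snoc_negForm]
      simp only [negForm, single_dot]
      simp [hεsq]
  · rintro (u | ⟨⟩) (v | ⟨⟩) h
    · rw [gocl_adj_inl_inl] at h
      have huv : u ≠ v := h.ne
      rw [snoc_negForm, hadj u v h]
      by_cases h2 : v = B
      · rw [if_neg (show u ≠ B from fun h1 => huv (h1.trans h2.symm))]; ring
      · rw [if_neg h2]; ring
    · rw [gocl_adj_inl_inr] at h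
      subst h
      rw [snoc_negForm, if_neg hAB]
      simp only [negForm, dot_single]
      simp [hεsq]; rw [← hε]; exact hεsq
    · rw [(goclGraph G A).adj_comm, gocl_adj_inl_inr] at h
      subst h
      rw [snoc_negForm, if_neg hAB]
      simp only [negForm, single_dot]
      simp [hεsq, mul_comm]; rw [← hε]; exact hεsq
    · exact ((goclGraph G A).irrefl h).elim
  · rintro (u | ⟨⟩) (v | ⟨⟩) hne hna
    · have huv : u ≠ v := by simpa using hne
      have hG : ¬ G.Adj u v := fun h => hna ((gocl_adj_inl_inl G A u v).2 h)
      rw [snoc_negForm, hnadj u v huv hG]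
      by_cases h2 : v = B
      · rw [if_neg (show u ≠ B from fun h1 => huv (h1.trans h2.symm))]; ring
      · rw [if_neg h2]; ring
    · have huA : u ≠ A := fun h => hna ((gocl_adj_inl_inr G A u _).2 h)
      rw [snoc_negForm]
      simp only [negForm, dot_single]
      by_cases h : u = B
      · rw [if_pos h, h, hB]; ring
      · rw [if_neg h, hzero u huA h]; ring
    · have hvA : v ≠ A := by
        intro h
        exact hna (((goclGraph G A).adj_comm _ _).1 ((gocl_adj_inl_inr G A v _).2 h))
      rw [snoc_negForm]
      simp only [negForm, single_dot]
      by_cases h : v = B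
      · rw [if_pos h, h, hB]; ring
      · rw [if_neg h, hzero v hvA h]; ring
    · exact absurd rfl hne.elim
  · refine ⟨Fin.last N, ?_, ?_, ?_, ?_⟩
    · rintro (v | ⟨⟩) h
      · right
        simp only [Fin.snoc_last] at h
        by_contra hvB
        simp only [Sum.inl.injEq] at hvB
        exact h (if_neg hvB)
      · left; rfl
    · simp [Fin.snoc_last]
    · simp only [Fin.snoc_last, if_pos rfl, abs_mul]
      rcases hA with h | h <;> rw [← hε] at * <;> simp [h]
    · simp only [Fin.snoc_last, if_pos rfl, if_true, eq_self_iff_true, hB, one_mul, hε]
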